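/- Let k ≥ 1 and let α ≥ 2 be an integer. Let J_k(α, y) be the (k+2)×(k+2) tridiagonal matrix over ℤ[y] with diagonal entries (α, 2, 2, …, 2, y²), sub- and super-diagonal entries (1, 1, …, 1, y), and all other entries 0. Then the characteristic polynomial of J_k(α, y), regarded as an element of ℤ[t, y], is irreducible. -/

import Mathlib

open Polynomial Matrix

namespace JacobiAux

/-! ### Continuant polynomials -/

noncomputable def P (α : ℤ) : ℕ → Polynomial ℤ
  | 0 => 1
  | 1 => X - C α
  | (n+2) => (X - 2) * P α (n+1) - P α n

theorem P_eval_zero (α : ℤ) : ∀ n : ℕ, (P α n).eval 0 = (-1)^n * (1 + n * (α - 1))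
  | 0 => by simp [P]
  | 1 => by simp [P]
  | (n+2) => by
      have h1 := P_eval_zero α n
      have h2 := P_eval_zero α (n+1)
      simp only [P, eval_sub, eval_mul, eval_X, eval_ofNat, h1, h2]
      push_cast
      ring

theorem P_coprime (α : ℤ) : ∀ n : ℕ, IsCoprime (P α (n+1)) (P α n)
  | 0 => by simpa [P] using isCoprime_one_right
  | (n+1) => by
      have h := (P_coprime α n).symm.neg_left
      have h2 := h.add_mul_right_left (X - 2)
      have : -P α n + (X - 2) * P α (n+1) = P α (n+2) := by
        rw [show P α (n+2) = (X - 2) * P α (n+1) - P α n from rfl]; ring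
      rw [this] at h2
      exact h2

/-! ### Irreducibility of `C (X * P (k+1)) - C (P (k+1) + P k) * X ^ 2` -/

theorem irred_aux (k : ℕ) (α : ℤ) (hα : 2 ≤ α) :
    Irreducible (C (X * P α (k+1)) - C (P α (k+1) + P α k) * X ^ 2 :
      Polynomial (Polynomial ℤ)) := by
  set u : Polynomial ℤ := X * P α (k+1) with hu_def
  set A : Polynomial ℤ := P α (k+1) + P α k with hA_def
  set q : Polynomial (Polynomial ℤ) := C u - C A * X ^ 2 with hq_def
  have hP1 : (P α (k+1)).eval 0 ≠ 0 := by
    rw [P_eval_zero]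
    refine mul_ne_zero (pow_ne_zero _ (by norm_num)) ?_
    have h1 : (0:ℤ) ≤ ((k+1 : ℕ) : ℤ) := Int.natCast_nonneg _
    nlinarith
  have hA0 : A.eval 0 ≠ 0 := by
    have h1 := P_eval_zero α (k+1)
    have h2 := P_eval_zero α k
    have he : A.eval 0 = (-1)^k * (1 - α) := by
      rw [hA_def, eval_add, h1, h2]; push_cast; ring
    rw [he]
    exact mul_ne_zero (pow_ne_zero _ (by norm_num)) (by linarith)
  have hAne : A ≠ 0 := fun h => hA0 (by simp [h])
  have hPne : P α (k+1) ≠ 0 := fun h => hP1 (by simp [h])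
  have hune : u ≠ 0 := mul_ne_zero X_ne_zero hPne
  have hXA : ¬ (X : Polynomial ℤ) ∣ A := by
    rw [X_dvd_iff, coeff_zero_eq_eval_zero]; exact hA0
  have hcop : IsCoprime A (P α (k+1)) := by
    have h := (P_coprime α k).symm
    have h2 := h.add_mul_left_left 1
    rw [mul_one] at h2
    rwa [hA_def, add_comm]
  have key : ∀ s : Polynomial ℤ, s ∣ u → s ∣ A → IsUnit s := by
    intro s hsu hsA
    have hsc : IsCoprime s (P α (k+1)) := hcop.of_isCoprime_of_dvd_left hsA
    have hsX : s ∣ (X : Polynomial ℤ) := hsc.dvd_of_dvd_mul_right hsu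
    obtain ⟨w, hw⟩ := hsX
    rcases (Polynomial.prime_X (R := ℤ)).irreducible.isUnit_or_isUnit hw with h | h
    · exact h
    · exfalso
      obtain ⟨w', hw'⟩ := h.exists_right_inv
      have hxs : (X : Polynomial ℤ) ∣ s :=
        ⟨w', by rw [hw, mul_assoc, hw', mul_one]⟩
      exact hXA (hxs.trans hsA)
  have hc2 : q.coeff 2 = -A := by simp [hq_def, coeff_X_pow, coeff_C]
  have hc1 : q.coeff 1 = 0 := by simp [hq_def, coeff_X_pow, coeff_C]
  have hc0 : q.coeff 0 = u := by simp [hq_def, coeff_X_pow, coeff_C]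
  have hqne : q ≠ 0 := by
    intro h
    rw [h, coeff_zero] at hc2
    exact hAne (neg_eq_zero.mp hc2.symm)
  have hdeg : q.natDegree = 2 := by
    refine le_antisymm ?_ (le_natDegree_of_ne_zero (by rw [hc2]; exact neg_ne_zero.mpr hAne))
    have h1 : (C u : Polynomial (Polynomial ℤ)).natDegree = 0 := natDegree_C _
    have h2 : (C A * X ^ 2 : Polynomial (Polynomial ℤ)).natDegree ≤ 2 :=
      (natDegree_C_mul_le _ _).trans (by simp)
    exact (natDegree_sub_le _ _).trans (by omega)
  constructor
  · intro hunit
    have := natDegree_eq_zero_of_isUnit hunit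
    omega
  · intro f g hfg
    have hf : f ≠ 0 := by rintro rfl; rw [zero_mul] at hfg; exact hqne hfg
    have hg : g ≠ 0 := by rintro rfl; rw [mul_zero] at hfg; exact hqne hfg
    have hsum : f.natDegree + g.natDegree = 2 := by
      rw [← natDegree_mul hf hg, ← hfg, hdeg]
    have hconst : ∀ h₁ h₂ : Polynomial (Polynomial ℤ),
        q = h₁ * h₂ → h₁.natDegree = 0 → IsUnit h₁ := by
      intro h₁ h₂ hq12 h10
      have h1e := eq_C_of_natDegree_eq_zero h10
      have hdvd : ∀ n, h₁.coeff 0 ∣ q.coeff n := by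
        intro n
        have hcc : q.coeff n = h₁.coeff 0 * h₂.coeff n := by
          rw [hq12]
          conv_lhs => rw [h1e]
          rw [coeff_C_mul]
        exact Dvd.intro _ hcc.symm
      have hu' : h₁.coeff 0 ∣ u := by have := hdvd 0; rwa [hc0] at this
      have hA' : h₁.coeff 0 ∣ A := by
        have := hdvd 2; rw [hc2] at this; exact (dvd_neg).mp this
      have := key _ hu' hA'
      rw [h1e]
      exact this.map Polynomial.C
    rcases Nat.lt_or_ge f.natDegree 1 with h | h
    · exact Or.inl (hconst f g hfg (by omega))
    rcases Nat.lt_or_ge g.natDegree 1 with h' | h'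
    · exact Or.inr (hconst g f (by rw [hfg, mul_comm]) (by omega))
    exfalso
    have hf1 : f.natDegree = 1 := by omega
    have hg1 : g.natDegree = 1 := by omega
    set a := f.coeff 1 with ha_def
    set b := f.coeff 0 with hb_def
    set c := g.coeff 1 with hc_def
    set d := g.coeff 0 with hd_def
    have hfe : f = C a * X + C b := eq_X_add_C_of_natDegree_le_one (by omega)
    have hge : g = C c * X + C d := eq_X_add_C_of_natDegree_le_one (by omega)
    have hexp : q = C (a*c) * X^2 + C (a*d + b*c) * X + C (b*d) := by
      rw [hfg, hfe, hge]; simp only [C_mul, C_add]; ring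
    have e2 : a * c = -A := by
      have h := congrArg (fun p : Polynomial (Polynomial ℤ) => p.coeff 2) hexp
      simp only [hc2] at h
      simp only [coeff_add, coeff_C_mul, coeff_X_pow, coeff_X, coeff_C] at h
      norm_num at h
      exact h.symm
    have e1 : a * d + b * c = 0 := by
      have h := congrArg (fun p : Polynomial (Polynomial ℤ) => p.coeff 1) hexp
      simp only [hc1] at h
      simp only [coeff_add, coeff_C_mul, coeff_X_pow, coeff_X, coeff_C] at h
      norm_num at h
      exact h.symm
    have e0 : b * d = u := by
      have h := congrArg (fun p : Polynomial (Polynomial ℤ) => p.coeff 0) hexp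
      simp only [hc0] at h
      simp only [coeff_add, coeff_C_mul, coeff_X_pow, coeff_X, coeff_C] at h
      norm_num at h
      exact h.symm
    have ha : a ≠ 0 := by
      have := mt leadingCoeff_eq_zero.mp hf
      rwa [leadingCoeff, hf1] at this
    have hb : b ≠ 0 := fun h => hune (by rw [← e0, h, zero_mul])
    have hkey : a^2 * u = b^2 * A := by
      linear_combination (-a^2) * e0 + a*b*e1 + (-b^2) * e2
    have hmX : rootMultiplicity (0:ℤ) X = 1 := by
      simpa using rootMultiplicity_X_sub_C_self (x := (0:ℤ))
    have hmP : rootMultiplicity (0:ℤ) (P α (k+1)) = 0 := rootMultiplicity_eq_zero hP1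
    have hmA : rootMultiplicity (0:ℤ) A = 0 := rootMultiplicity_eq_zero hA0
    have hlhs : rootMultiplicity (0:ℤ) (a^2 * u) =
        2 * rootMultiplicity 0 a + 1 := by
      rw [rootMultiplicity_mul (mul_ne_zero (pow_ne_zero _ ha) hune), hu_def,
        rootMultiplicity_mul (mul_ne_zero X_ne_zero hPne), hmX, hmP,
        pow_two, rootMultiplicity_mul (mul_ne_zero ha ha)]
      ring
    have hrhs : rootMultiplicity (0:ℤ) (b^2 * A) =
        2 * rootMultiplicity 0 b := by
      rw [rootMultiplicity_mul (mul_ne_zero (pow_ne_zero _ hb) hAne), hmA,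
        pow_two, rootMultiplicity_mul (mul_ne_zero hb hb)]
      ring
    have := congrArg (rootMultiplicity (0:ℤ)) hkey
    rw [hlhs, hrhs] at this
    omega

/-! ### The swap involution of `ℤ[y][t]` -/

noncomputable def swapHom : Polynomial (Polynomial ℤ) →+* Polynomial (Polynomial ℤ) :=
  eval₂RingHom (eval₂RingHom (Polynomial.C.comp Polynomial.C) X) (C X)

@[simp] theorem swapHom_CC (a : ℤ) : swapHom (C (C a)) = C (C a) := by
  simp [swapHom, eval₂_C]

@[simp] theorem swapHom_CX : swapHom (C X) = X := by
  simp [swapHom, eval₂_C]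

@[simp] theorem swapHom_X : swapHom X = C X := by
  simp [swapHom]

theorem swapHom_comp : swapHom.comp swapHom = RingHom.id _ := by
  apply Polynomial.ringHom_ext
  · intro p
    have : (swapHom.comp swapHom).comp Polynomial.C =
        (RingHom.id (Polynomial (Polynomial ℤ))).comp Polynomial.C := by
      apply Polynomial.ringHom_ext
      · intro a
        simp
      · simp
    exact RingHom.congr_fun this p
  · simp

noncomputable def swapEquiv : Polynomial (Polynomial ℤ) ≃+* Polynomial (Polynomial ℤ) :=
  RingEquiv.ofRingHom swapHom swapHom
    (by exact swapHom_comp) (by exact swapHom_comp)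

theorem swapHom_mapC (p : Polynomial ℤ) :
    swapHom (p.map Polynomial.C) = C p := by
  have : swapHom.comp (mapRingHom Polynomial.C) = Polynomial.C := by
    apply Polynomial.ringHom_ext
    · intro a
      simp
    · simp
  exact RingHom.congr_fun this p

theorem irreducible_of_swap (p : Polynomial (Polynomial ℤ))
    (h : Irreducible (swapHom p)) : Irreducible p := by
  have : swapHom p = swapEquiv p := rfl
  rw [this] at h
  exact (MulEquiv.irreducible_iff
    (swapEquiv : Polynomial (Polynomial ℤ) ≃* Polynomial (Polynomial ℤ))).mp h

/-! ### Tridiagonal determinants -/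

variable {R : Type*} [CommRing R]

def T (dg e : ℕ → R) (n : ℕ) : Matrix (Fin n) (Fin n) R :=
  Matrix.of fun p q =>
    if (p:ℕ) = (q:ℕ) then dg (p:ℕ)
    else if (p:ℕ)+1 = (q:ℕ) then e (p:ℕ)
    else if (q:ℕ)+1 = (p:ℕ) then e (q:ℕ)
    else 0

theorem T_apply (dg e : ℕ → R) (n : ℕ) (p q : Fin n) :
    T dg e n p q =
      if (p:ℕ) = (q:ℕ) then dg (p:ℕ)
      else if (p:ℕ)+1 = (q:ℕ) then e (p:ℕ)
      else if (q:ℕ)+1 = (p:ℕ) then e (q:ℕ)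
      else 0 := rfl

theorem coe_succAbove {m : ℕ} (j : Fin (m+1)) (i : Fin m) :
    ((j.succAbove i : Fin (m+1)) : ℕ) = if (i:ℕ) < (j:ℕ) then (i:ℕ) else (i:ℕ)+1 := by
  rw [Fin.succAbove]
  split_ifs with h1 h2 h3 <;>
    simp_all [Fin.lt_def, Fin.coe_castSucc, Fin.val_succ]

theorem det_T_zero (dg e : ℕ → R) : (T dg e 0).det = 1 := Matrix.det_fin_zero

theorem det_T_one (dg e : ℕ → R) : (T dg e 1).det = dg 0 := by
  rw [Matrix.det_fin_one, T_apply]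
  norm_num

theorem det_T_rec (dg e : ℕ → R) (n : ℕ) :
    (T dg e (n+2)).det =
      dg (n+1) * (T dg e (n+1)).det - e n * e n * (T dg e n).det := by
  rw [Matrix.det_succ_row (T dg e (n+2)) (Fin.last (n+1))]
  have hne : (⟨n, by omega⟩ : Fin (n+2)) ≠ Fin.last (n+1) := by
    simp [Fin.ext_iff, Fin.val_last]
  rw [← Finset.sum_subset
    (Finset.subset_univ ({(⟨n, by omega⟩ : Fin (n+2)), Fin.last (n+1)} : Finset (Fin (n+2))))
    (by
      intro x _ hx
      simp only [Finset.mem_insert, Finset.mem_singleton] at hx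
      push_neg at hx
      have hx1 : (x:ℕ) ≠ n := fun h => hx.1 (Fin.ext (by simpa using h))
      have hx2 : (x:ℕ) ≠ n+1 := fun h => hx.2 (Fin.ext (by simpa [Fin.val_last] using h))
      have hz : T dg e (n+2) (Fin.last (n+1)) x = 0 := by
        rw [T_apply]
        simp only [Fin.val_last]
        rw [if_neg (by omega), if_neg (by omega), if_neg (by omega)]
      rw [hz]
      ring),
    Finset.sum_pair hne]
  have hent1 : T dg e (n+2) (Fin.last (n+1)) ⟨n, by omega⟩ = e n := by
    rw [T_apply]
    simp only [Fin.val_last, Fin.val_mk]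
    rw [if_neg (by omega), if_neg (by omega)]
    simp
  have hent2 : T dg e (n+2) (Fin.last (n+1)) (Fin.last (n+1)) = dg (n+1) := by
    rw [T_apply]
    simp only [Fin.val_last]
    simp
  have hsubm2 : (T dg e (n+2)).submatrix (Fin.last (n+1)).succAbove (Fin.last (n+1)).succAbove
      = T dg e (n+1) := by
    ext p q
    rw [Matrix.submatrix_apply, Fin.succAbove_last, T_apply, T_apply,
      Fin.coe_castSucc, Fin.coe_castSucc]
  have hdetB : ((T dg e (n+2)).submatrix (Fin.last (n+1)).succAbove
      (⟨n, by omega⟩ : Fin (n+2)).succAbove).det = e n * (T dg e n).det := by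
    set B := (T dg e (n+2)).submatrix (Fin.last (n+1)).succAbove
      (⟨n, by omega⟩ : Fin (n+2)).succAbove with hB
    have hBapp : ∀ (i : Fin (n+1)) (q : Fin (n+1)),
        B i q = T dg e (n+2) ((Fin.last (n+1)).succAbove i)
          ((⟨n, by omega⟩ : Fin (n+2)).succAbove q) := by
      intro i q; rfl
    rw [Matrix.det_succ_column B (Fin.last n)]
    rw [Finset.sum_eq_single (Fin.last n)]
    · have hcol : B (Fin.last n) (Fin.last n) = e n := by
        rw [hBapp, T_apply, Fin.succAbove_last, coe_succAbove]
        simp only [Fin.coe_castSucc, Fin.val_last, Fin.val_mk]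
        rw [if_neg (lt_irrefl n), if_neg (by omega)]
        simp
      have hsubm : B.submatrix (Fin.last n).succAbove (Fin.last n).succAbove = T dg e n := by
        ext p q
        rw [Matrix.submatrix_apply, Fin.succAbove_last, hBapp, Fin.succAbove_last,
          T_apply, T_apply]
        simp only [Fin.coe_castSucc, coe_succAbove, Fin.val_mk]
        rw [if_pos q.isLt]
      rw [hcol, hsubm]
      simp only [Fin.val_last]
      have hsign : (-1 : R) ^ (n + n) = 1 := Even.neg_one_pow ⟨n, rfl⟩
      rw [hsign]; ring
    · intro i _ hi
      have hiv : (i : ℕ) < n := by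
        have h1 := i.isLt
        have h2 : (i:ℕ) ≠ n := fun h => hi (Fin.ext (by rw [h, Fin.val_last]))
        omega
      have hz : B i (Fin.last n) = 0 := by
        rw [hBapp, T_apply, Fin.succAbove_last, coe_succAbove]
        simp only [Fin.coe_castSucc, Fin.val_last, Fin.val_mk]
        rw [if_neg (lt_irrefl n), if_neg (by omega), if_neg (by omega), if_neg (by omega)]
      rw [hz]; ring
    · intro h
      exact absurd (Finset.mem_univ _) h
  rw [hent1, hent2, hsubm2, hdetB]
  simp only [Fin.val_last, Fin.val_mk]
  have hs1 : (-1 : R) ^ ((n+1) + n) = -1 := Odd.neg_one_pow ⟨n, by ring⟩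
  have hs2 : (-1 : R) ^ ((n+1) + (n+1)) = 1 := Even.neg_one_pow ⟨n+1, rfl⟩
  rw [hs1, hs2]
  ring

/-! ### The diagonal and off-diagonal functions for the Jacobi matrix -/

noncomputable def dgJ (α : ℤ) (k : ℕ) : ℕ → Polynomial (Polynomial ℤ) := fun i =>
  X - C (if i = 0 then C α else if i = k + 1 then X ^ 2 else 2)

noncomputable def eJ (k : ℕ) : ℕ → Polynomial (Polynomial ℤ) := fun i =>
  -C (if i = k then (X : Polynomial ℤ) else 1)

end JacobiAux

open JacobiAux

/-- For `k ≥ 1` and an integer `α ≥ 2`, the characteristic polynomial of the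
`(k+2) × (k+2)` tridiagonal matrix over `ℤ[y]` with diagonal `(α, 2, …, 2, y²)` and
sub/super-diagonal entries `(1, …, 1, y)` is irreducible as an element of
`ℤ[t, y] = (ℤ[y])[t]`. -/
theorem irreducible_charpoly_jacobi_matrix
    (k : ℕ) (hk : 1 ≤ k) (α : ℤ) (hα : 2 ≤ α)
    (J : Matrix (Fin (k + 2)) (Fin (k + 2)) (Polynomial ℤ))
    (hJ : ∀ p q : Fin (k + 2), J p q =
      if p = q then
        (if (p : ℕ) = 0 then Polynomial.C α
         else if (p : ℕ) = k + 1 then Polynomial.X ^ 2 else 2)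
      else if (p : ℕ) + 1 = (q : ℕ) ∨ (q : ℕ) + 1 = (p : ℕ) then
        (if (p : ℕ) = k + 1 ∨ (q : ℕ) = k + 1 then Polynomial.X else 1)
      else 0) :
    Irreducible J.charpoly := by
  -- identify the characteristic matrix as a tridiagonal matrix
  have hchar : charmatrix J = T (dgJ α k) (eJ k) (k+2) := by
    ext p q : 2
    by_cases hpq : p = q
    · subst hpq
      rw [charmatrix_apply_eq, hJ, T_apply, if_pos rfl, if_pos rfl]
      rfl
    · rw [charmatrix_apply_ne _ _ _ hpq, hJ, T_apply, if_neg hpq,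
        if_neg (fun h => hpq (Fin.ext h))]
      by_cases h1 : (p:ℕ) + 1 = (q:ℕ)
      · rw [if_pos (Or.inl h1), if_pos h1]
        have hiff : ((p:ℕ) = k+1 ∨ (q:ℕ) = k+1) ↔ (p:ℕ) = k := by
          have hq2 := q.isLt
          constructor
          · rintro (h | h) <;> omega
          · intro h; right; omega
        simp only [eJ]
        rw [if_congr hiff rfl rfl]
      · rw [if_neg h1]
        by_cases h2 : (q:ℕ) + 1 = (p:ℕ)
        · rw [if_pos (Or.inr h2), if_pos h2]
          have hiff : ((p:ℕ) = k+1 ∨ (q:ℕ) = k+1) ↔ (q:ℕ) = k := by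
            have hp2 := p.isLt
            constructor
            · rintro (h | h) <;> omega
            · intro h; left; omega
          simp only [eJ]
          rw [if_congr hiff rfl rfl]
        · rw [if_neg (by tauto), if_neg h2]
          simp
  -- determinants of the leading principal minors
  have hTP : ∀ m, m ≤ k + 1 → (T (dgJ α k) (eJ k) m).det = (P α m).map Polynomial.C := by
    intro m
    induction m using Nat.strong_induction_on with
    | _ m ih =>
      match m with
      | 0 => intro _; simp [det_T_zero, P]
      | 1 =>
        intro _
        rw [det_T_one]
        have : dgJ α k 0 = X - C (C α) := by simp [dgJ]
        rw [this, show P α 1 = X - C α from rfl]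
        simp
      | (m+2) =>
        intro hm
        rw [det_T_rec, ih (m+1) (by omega) (by omega), ih m (by omega) (by omega)]
        have hd : dgJ α k (m+1) = X - 2 := by
          simp only [dgJ]
          rw [if_neg (by omega), if_neg (by omega), _root_.map_ofNat]
        have he : eJ k m = -1 := by
          simp only [eJ]
          rw [if_neg (by omega), _root_.map_one]
        rw [hd, he, show P α (m+2) = (X - 2) * P α (m+1) - P α m from rfl]
        simp only [Polynomial.map_sub, Polynomial.map_mul, Polynomial.map_ofNat,
          Polynomial.map_X]
        ring
  -- compute the characteristic polynomial
  have hcp : J.charpoly =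
      (X - C ((X : Polynomial ℤ)^2)) * ((P α (k+1)).map Polynomial.C)
        - (C (X : Polynomial ℤ) * C (X : Polynomial ℤ)) * ((P α k).map Polynomial.C) := by
    rw [Matrix.charpoly, hchar, det_T_rec, hTP (k+1) le_rfl, hTP k (by omega)]
    have hd : dgJ α k (k+1) = X - C ((X : Polynomial ℤ)^2) := by
      simp [dgJ]
    have he : eJ k k = -C (X : Polynomial ℤ) := by
      simp [eJ]
    rw [hd, he, neg_mul_neg]
  apply irreducible_of_swap
  have hswap : swapHom J.charpoly =
      C (X * P α (k+1)) - C (P α (k+1) + P α k) * X ^ 2 := by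
    rw [hcp]
    simp only [map_sub, _root_.map_mul, map_pow, C_pow, swapHom_X, swapHom_mapC, swapHom_CX]
    simp only [C_mul, C_add]
    ring
  rw [hswap]
  exact irred_aux k α hα
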